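/- Let G_1 = (V_1, E_1) and G_2 = (V_2, E_2) be exactly k-edge-connected multigraphs on disjoint vertex sets, let u_1 ∈ V_1 and u_2 ∈ V_2 be vertices of degree k with (not necessarily distinct) neighbors v_1^1,...,v_1^k of u_1 and v_2^1,...,v_2^k of u_2 listed so that the i-th edge at u_1 goes to v_1^i and the i-th edge at u_2 goes to v_2^i. Let G be the vertex gluing of G_1 and G_2: delete u_1 and u_2 together with their incident edges and add the k edges (v_1^i, v_2^i) for 1 ≤ i ≤ k. Then G is exactly k-edge-connected. -/

import Mathlib

/-! Basic theory of loopless undirected multigraphs. -/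

/-- A loopless undirected multigraph on the vertex type `V`: a type of edges
together with a map assigning to each edge its unordered pair of (distinct)
endpoints.  All multigraphs are assumed to have finitely many edges. -/
structure Multigraph (V : Type) where
  Edge : Type
  ends : Edge → Sym2 V
  loopless : ∀ e, ¬ (ends e).IsDiag
  edge_finite : Finite Edge

namespace Multigraph

open scoped Classical

variable {V : Type}

instance (G : Multigraph V) : Finite G.Edge := G.edge_finite

lemma exists_pair_eq {α : Type} (z : Sym2 α) : ∃ x y, z = s(x, y) := by
  induction z using Sym2.ind with
  | _ x y => exact ⟨x, y, rfl⟩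

lemma map_not_isDiag {α β : Type} (f : α → β) (z : Sym2 α)
    (hf : ∀ x ∈ z, ∀ y ∈ z, f x = f y → x = y) (hz : ¬ z.IsDiag) :
    ¬ (z.map f).IsDiag := by
  obtain ⟨x, y, rfl⟩ := exists_pair_eq z
  rw [Sym2.map_pair_eq, Sym2.mk_isDiag_iff]
  rw [Sym2.mk_isDiag_iff] at hz
  exact fun h => hz (hf x (by simp) y (by simp) h)

/-- Restrict an unordered pair, all of whose members satisfy `P`, to an
unordered pair of elements of the subtype `{x // P x}`. -/
noncomputable def sym2RestrictP {α : Type} (P : α → Prop) (z : Sym2 α) (h : ∀ x ∈ z, P x) :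
    Sym2 {x : α // P x} :=
  z.map fun x =>
    if hx : P x then ⟨x, hx⟩
    else Classical.choice (by
      obtain ⟨a, b, rfl⟩ := exists_pair_eq z
      exact ⟨⟨a, h a (by simp)⟩⟩)

lemma sym2RestrictP_not_isDiag {α : Type} (P : α → Prop) (z : Sym2 α) (h : ∀ x ∈ z, P x)
    (hz : ¬ z.IsDiag) : ¬ (sym2RestrictP P z h).IsDiag := by
  apply map_not_isDiag
  · intro a ha b hb hab
    rw [dif_pos (h a ha), dif_pos (h b hb)] at hab
    exact congrArg Subtype.val hab
  · exact hz

/-- Walks in a multigraph, recorded as alternating sequences of vertices and edges. -/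
inductive Walk (G : Multigraph V) : V → V → Type
  | nil (v : V) : Walk G v v
  | cons {u v w : V} (e : G.Edge) (he : G.ends e = s(u, v)) (p : Walk G v w) : Walk G u w

namespace Walk

variable {G : Multigraph V}

/-- The list of edges used by a walk. -/
def edges : ∀ {u v : V}, G.Walk u v → List G.Edge
  | _, _, nil _ => []
  | _, _, cons e _ p => e :: p.edges

/-- The list of vertices visited by a walk, in order. -/
def support : ∀ {u v : V}, G.Walk u v → List V
  | u, _, nil _ => [u]
  | u, _, cons _ _ p => u :: p.support

end Walk

/-- `G.HasEDP u v k` : there are (at least) `k` pairwise edge-disjoint paths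
between `u` and `v` in `G` (formalized as `k` pairwise edge-disjoint trails,
which is equivalent). -/
def HasEDP (G : Multigraph V) (u v : V) (k : ℕ) : Prop :=
  ∃ P : Fin k → G.Walk u v,
    (∀ i, (P i).edges.Nodup) ∧
    ∀ i j, i ≠ j → ∀ e, e ∈ (P i).edges → e ∉ (P j).edges

/-- `G` is `k`-edge-connected: between any two distinct vertices there are at
least `k` pairwise edge-disjoint paths. -/
def EdgeConnected (G : Multigraph V) (k : ℕ) : Prop :=
  Nontrivial V ∧ ∀ u v : V, u ≠ v → G.HasEDP u v k

/-- `G` is exactly `k`-edge-connected: between any two distinct vertices there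
are exactly `k` pairwise edge-disjoint paths (at least `k`, and not `k + 1`). -/
def ExactlyEdgeConnected (G : Multigraph V) (k : ℕ) : Prop :=
  Nontrivial V ∧ ∀ u v : V, u ≠ v → G.HasEDP u v k ∧ ¬ G.HasEDP u v (k + 1)

/-- The degree of a vertex: the number of edges incident to it. -/
noncomputable def degree (G : Multigraph V) (v : V) : ℕ :=
  {e : G.Edge | v ∈ G.ends e}.ncard

/-- Two vertices are adjacent if some edge joins them. -/
def Adj (G : Multigraph V) (u v : V) : Prop := ∃ e : G.Edge, G.ends e = s(u, v)

/-- `G` restricted to `S` is connected (witnessed by walks staying inside `S`). -/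
def ConnectedOn (G : Multigraph V) (S : Set V) : Prop :=
  ∀ u ∈ S, ∀ v ∈ S, ∃ p : G.Walk u v, ∀ x ∈ p.support, x ∈ S

/-- A multigraph is connected if it is nonempty and any two vertices are
joined by a walk. -/
def Connected (G : Multigraph V) : Prop :=
  Nonempty V ∧ ∀ u v : V, Nonempty (G.Walk u v)

/-- A multigraph is 2-vertex-connected (biconnected) if it is connected and
removing any single vertex leaves it connected. -/
def Biconnected (G : Multigraph V) : Prop :=
  G.Connected ∧ ∀ x : V, G.ConnectedOn {x}ᶜ

/-- A closed walk is a cycle if it repeats no edge, repeats no vertex except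
the base point, and has length at least 2 (a double edge is a cycle of
length 2; loops are excluded since multigraphs are loopless). -/
def IsCycle {G : Multigraph V} {v : V} (p : G.Walk v v) : Prop :=
  p.edges.Nodup ∧ p.support.tail.Nodup ∧ 2 ≤ p.edges.length

/-- A closed walk is chordless if no edge outside of it joins two of its
vertices (a parallel copy of one of its edges counts as a chord). -/
def IsChordless {G : Multigraph V} {v : V} (p : G.Walk v v) : Prop :=
  ∀ e : G.Edge, e ∉ p.edges → ∀ x y : V, G.ends e = s(x, y) →
    x ∈ p.support → y ∈ p.support → False

/-- `G.ReachAvoid S x y`: there is a walk from `x` to `y` avoiding the set `S`. -/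
def ReachAvoid (G : Multigraph V) (S : Set V) (x y : V) : Prop :=
  ∃ p : G.Walk x y, ∀ z ∈ p.support, z ∉ S

/-- The vertex sets of the connected components of `G ∖ S`.  For a cycle (or
any subgraph) `C`, the `C`-partition of the paper consists of `C` together
with these components; its size is the number of components. -/
def componentsAvoiding (G : Multigraph V) (S : Set V) : Set (Set V) :=
  {T | ∃ x, x ∉ S ∧ T = {y | G.ReachAvoid S x y}}

/-- Contract the (nonempty) vertex set `S` of `G` to a single new vertex
(`none`), deleting the edges inside `S`. -/
noncomputable def contractSet (G : Multigraph V) (S : Set V) :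
    Multigraph (Option {x : V // x ∉ S}) where
  Edge := {e : G.Edge // ¬ ∀ x ∈ G.ends e, x ∈ S}
  ends e := (G.ends e.1).map fun x => if h : x ∈ S then none else some ⟨x, h⟩
  loopless := by
    rintro ⟨e, he⟩ hd
    obtain ⟨x, y, hxy⟩ := exists_pair_eq (G.ends e)
    have hxyne : x ≠ y := by
      have h0 := G.loopless e
      rw [hxy, Sym2.mk_isDiag_iff] at h0
      exact h0
    have hor : x ∉ S ∨ y ∉ S := by
      by_contra hcon
      push_neg at hcon
      refine he fun z hz => ?_
      rw [hxy, Sym2.mem_iff] at hz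
      rcases hz with rfl | rfl
      exacts [hcon.1, hcon.2]
    simp only [hxy, Sym2.map_pair_eq, Sym2.mk_isDiag_iff] at hd
    rcases hor with hx | hy
    · rw [dif_neg hx] at hd
      by_cases hy : y ∈ S
      · rw [dif_pos hy] at hd; exact nomatch hd
      · rw [dif_neg hy] at hd
        exact hxyne (congrArg Subtype.val (Option.some_injective _ hd))
    · rw [dif_neg hy] at hd
      by_cases hx : x ∈ S
      · rw [dif_pos hx] at hd; exact nomatch hd
      · rw [dif_neg hx] at hd
        exact hxyne (congrArg Subtype.val (Option.some_injective _ hd))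
  edge_finite := by
    have := G.edge_finite
    exact inferInstance

/-- The subgraph of `G` induced by the vertex set `S`. -/
noncomputable def induce (G : Multigraph V) (S : Set V) : Multigraph ↥S where
  Edge := {e : G.Edge // ∀ x ∈ G.ends e, x ∈ S}
  ends e := sym2RestrictP (· ∈ S) (G.ends e.1) e.2
  loopless := fun e => sym2RestrictP_not_isDiag _ _ _ (G.loopless e.1)
  edge_finite := by
    have := G.edge_finite
    exact inferInstance

/-- Isomorphism of multigraphs. -/
structure Iso {V W : Type} (G : Multigraph V) (H : Multigraph W) where
  vmap : V ≃ W
  emap : G.Edge ≃ H.Edge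
  ends_vmap : ∀ e : G.Edge, H.ends (emap e) = (G.ends e).map vmap

/-- `G` is quasi `k`-regular: at most one vertex has degree different from `k`. -/
def QuasiRegular (G : Multigraph V) (k : ℕ) : Prop :=
  {v : V | G.degree v ≠ k}.Subsingleton

end Multigraph
namespace Multigraph

open scoped Classical

variable {V : Type}

/-- Block gluing: identify the vertex `u₁` of `G₁` with the vertex `u₂` of `G₂`
(the identified vertex is represented by `Sum.inl u₁`), keeping all edges. -/
noncomputable def blockGlue {V₁ V₂ : Type} (G₁ : Multigraph V₁) (G₂ : Multigraph V₂)
    (u₁ : V₁) (u₂ : V₂) : Multigraph (V₁ ⊕ {y : V₂ // y ≠ u₂}) where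
  Edge := G₁.Edge ⊕ G₂.Edge
  ends e :=
    match e with
    | .inl e => (G₁.ends e).map Sum.inl
    | .inr e => (G₂.ends e).map fun y => if h : y = u₂ then Sum.inl u₁ else Sum.inr ⟨y, h⟩
  loopless := by
    rintro (e | e) hd
    · exact map_not_isDiag _ _ (fun x _ y _ h => Sum.inl_injective h) (G₁.loopless e) hd
    · refine map_not_isDiag _ _ (fun x _ y _ h => ?_) (G₂.loopless e) hd
      by_cases hx : x = u₂ <;> by_cases hy : y = u₂
      · rw [hx, hy]
      · simp [hx, hy] at h
      · simp [hx, hy] at h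
      · simp [hx, hy] at h
        exact h
  edge_finite := by
    have := G₁.edge_finite; have := G₂.edge_finite
    exact inferInstance

/-- `k`-bridge addition: add a new vertex (`none`) joined to the existing
vertex `v` by `k` parallel edges. -/
def bridgeAdd (G : Multigraph V) (v : V) (k : ℕ) : Multigraph (Option V) where
  Edge := G.Edge ⊕ Fin k
  ends e :=
    match e with
    | .inl e => (G.ends e).map some
    | .inr _ => s(none, some v)
  loopless := by
    rintro (e | i) hd
    · exact map_not_isDiag _ _ (fun x _ y _ h => Option.some_injective _ h) (G.loopless e) hd
    · rw [Sym2.mk_isDiag_iff] at hd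
      exact nomatch hd
  edge_finite := by
    have := G.edge_finite
    exact inferInstance

end Multigraph
namespace Multigraph

open scoped Classical

variable {V : Type}

lemma other_ne {G : Multigraph V} {u : V} {e : G.Edge} (h : u ∈ G.ends e) :
    Sym2.Mem.other h ≠ u := by
  intro heq
  have hs := Sym2.other_spec h
  rw [heq] at hs
  have hl := G.loopless e
  rw [← hs, Sym2.mk_isDiag_iff] at hl
  exact hl rfl

/-- Vertex gluing: given vertices `u₁` of `G₁` and `u₂` of `G₂`, both of degree
`k` (witnessed by enumerations `ι₁`, `ι₂` of their incident edges), delete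
`u₁` and `u₂` and join, for each `i`, the other endpoint of the `i`-th edge at
`u₁` to the other endpoint of the `i`-th edge at `u₂`. -/
noncomputable def vertexGlue {V₁ V₂ : Type} (G₁ : Multigraph V₁) (G₂ : Multigraph V₂)
    (u₁ : V₁) (u₂ : V₂) {k : ℕ}
    (ι₁ : Fin k ≃ {e : G₁.Edge // u₁ ∈ G₁.ends e})
    (ι₂ : Fin k ≃ {e : G₂.Edge // u₂ ∈ G₂.ends e}) :
    Multigraph ({x : V₁ // x ≠ u₁} ⊕ {y : V₂ // y ≠ u₂}) where
  Edge := {e : G₁.Edge // u₁ ∉ G₁.ends e} ⊕ {e : G₂.Edge // u₂ ∉ G₂.ends e} ⊕ Fin k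
  ends e :=
    match e with
    | .inl e =>
        (sym2RestrictP (· ≠ u₁) (G₁.ends e.1) fun x hx hxe => e.2 (hxe ▸ hx)).map Sum.inl
    | .inr (.inl e) =>
        (sym2RestrictP (· ≠ u₂) (G₂.ends e.1) fun y hy hye => e.2 (hye ▸ hy)).map Sum.inr
    | .inr (.inr i) =>
        s(Sum.inl ⟨Sym2.Mem.other (ι₁ i).2, other_ne (ι₁ i).2⟩,
          Sum.inr ⟨Sym2.Mem.other (ι₂ i).2, other_ne (ι₂ i).2⟩)
  loopless := by
    rintro (e | e | i) hd
    · exact map_not_isDiag _ _ (fun x _ y _ h => Sum.inl_injective h)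
        (sym2RestrictP_not_isDiag _ _ _ (G₁.loopless e.1)) hd
    · exact map_not_isDiag _ _ (fun x _ y _ h => Sum.inr_injective h)
        (sym2RestrictP_not_isDiag _ _ _ (G₂.loopless e.1)) hd
    · rw [Sym2.mk_isDiag_iff] at hd
      exact nomatch hd
  edge_finite := by
    have := G₁.edge_finite; have := G₂.edge_finite
    exact inferInstance

/-- Cycle expansion: replace the vertex `u`, of degree `d` with incident edges
enumerated by `ι`, by a cycle on `d'` new vertices `u_0, …, u_{d'-1}`
(`2 ≤ d' ≤ d`); the `i`-th former edge at `u` is attached to `u_i` for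
`i < d' - 1` and to `u_{d'-1}` for `i ≥ d' - 1`, so each of `u_0, …, u_{d'-2}`
receives exactly one of them and `u_{d'-1}` receives the rest. -/
noncomputable def cycleExpand (G : Multigraph V) (u : V) {d d' : ℕ}
    (h2 : 2 ≤ d') (hdd : d' ≤ d)
    (ι : Fin d ≃ {e : G.Edge // u ∈ G.ends e}) :
    Multigraph ({x : V // x ≠ u} ⊕ Fin d') where
  Edge := {e : G.Edge // u ∉ G.ends e} ⊕ (Fin d ⊕ Fin d')
  ends e :=
    match e with
    | .inl e =>
        (sym2RestrictP (· ≠ u) (G.ends e.1) fun x hx hxe => e.2 (hxe ▸ hx)).map Sum.inl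
    | .inr (.inl i) =>
        s(Sum.inr ⟨min i.1 (d' - 1), by omega⟩,
          Sum.inl ⟨Sym2.Mem.other (ι i).2, other_ne (ι i).2⟩)
    | .inr (.inr j) =>
        s(Sum.inr j, Sum.inr ⟨(j.1 + 1) % d', Nat.mod_lt _ (by omega)⟩)
  loopless := by
    rintro (e | i | j) hd
    · exact map_not_isDiag _ _ (fun x _ y _ h => Sum.inl_injective h)
        (sym2RestrictP_not_isDiag _ _ _ (G.loopless e.1)) hd
    · rw [Sym2.mk_isDiag_iff] at hd
      exact nomatch hd
    · rw [Sym2.mk_isDiag_iff] at hd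
      have hj : j.1 < d' := j.2
      have := congrArg Fin.val (Sum.inr_injective hd)
      simp only at this
      rcases Nat.lt_or_ge (j.1 + 1) d' with h | h
      · rw [Nat.mod_eq_of_lt h] at this; omega
      · have hj1 : j.1 + 1 = d' := by omega
        rw [hj1, Nat.mod_self] at this; omega
  edge_finite := by
    have := G.edge_finite
    exact inferInstance

end Multigraph
namespace Multigraph

open scoped Classical

variable {V : Type}

/-- The edges of `G` crossing the vertex bipartition `⟨A, Aᶜ⟩`. -/
def cutEdges (G : Multigraph V) (A : Set V) : Set G.Edge :=
  {e | (∃ x ∈ G.ends e, x ∈ A) ∧ ∃ y ∈ G.ends e, y ∉ A}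

/-- The bipartition `⟨A, Aᶜ⟩` is a minimum edge cut of `G`: both sides are
nonempty and no other bipartition has fewer crossing edges. -/
def IsMinCut (G : Multigraph V) (A : Set V) : Prop :=
  A.Nonempty ∧ Aᶜ.Nonempty ∧
    ∀ B : Set V, B.Nonempty → Bᶜ.Nonempty →
      (G.cutEdges A).ncard ≤ (G.cutEdges B).ncard

/-- One side of a vertex splitting: keep the side `A` of the cut `⟨A, Aᶜ⟩`,
delete the other side, and reattach each cut edge to a single new vertex
(`none`). -/
noncomputable def splitSide (G : Multigraph V) (A : Set V) :
    Multigraph (Option {x : V // x ∈ A}) where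
  Edge := {e : G.Edge // ∀ x ∈ G.ends e, x ∈ A} ⊕ {e : G.Edge // e ∈ G.cutEdges A}
  ends e :=
    match e with
    | .inl e => (sym2RestrictP (· ∈ A) (G.ends e.1) e.2).map some
    | .inr e =>
        s(none, some ⟨Classical.choose e.2.1, (Classical.choose_spec e.2.1).2⟩)
  loopless := by
    rintro (e | e) hd
    · exact map_not_isDiag _ _ (fun x _ y _ h => Option.some_injective _ h)
        (sym2RestrictP_not_isDiag _ _ _ (G.loopless e.1)) hd
    · rw [Sym2.mk_isDiag_iff] at hd
      exact nomatch hd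
  edge_finite := by
    have := G.edge_finite
    exact inferInstance

/-- The dumbbell graph: two vertices joined by three parallel edges. -/
def dumbbell : Multigraph (Fin 2) where
  Edge := Fin 3
  ends _ := s(0, 1)
  loopless := fun _ h => absurd (Sym2.mk_isDiag_iff.mp h) (by decide)
  edge_finite := inferInstance

/-- `B` is (the vertex set of) a block of `G`: a maximal set of vertices
inducing a connected, 2-vertex-connected subgraph. -/
def IsBlock (G : Multigraph V) (B : Set V) : Prop :=
  (G.induce B).Biconnected ∧
    ∀ B' : Set V, B ⊆ B' → (G.induce B').Biconnected → B' = B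

/-- The set of double edges of `G`, as unordered pairs of distinct parallel
edges. -/
def doubleEdges (G : Multigraph V) : Set (Sym2 G.Edge) :=
  {z | ∃ e f : G.Edge, z = s(e, f) ∧ e ≠ f ∧ G.ends e = G.ends f}

/-- A collapsible cycle: a chordless, non-articulation cycle, all but at most
one of whose vertices have degree 3, whose contraction to a single vertex
yields an exactly 3-edge-connected multigraph. -/
def IsCollapsible {G : Multigraph V} {v : V} (p : G.Walk v v) : Prop :=
  IsCycle p ∧ IsChordless p ∧
    (G.componentsAvoiding {x | x ∈ p.support}).Subsingleton ∧
    {x : V | x ∈ p.support ∧ G.degree x ≠ 3}.Subsingleton ∧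
    (G.contractSet {x | x ∈ p.support}).ExactlyEdgeConnected 3

end Multigraph
namespace Multigraph

open scoped Classical

variable {V : Type}

/-- Smooth out the degree-two vertex `x` (whose two incident edges are
`e₁ = (x, a)` and `e₂ = (x, b)`): delete `x`, `e₁` and `e₂` and add a single
new edge joining `a` and `b`. -/
noncomputable def smoothAt {S : Set V} (H : Multigraph ↥S) (x a b : ↥S)
    (e₁ e₂ : H.Edge) (hne : e₁ ≠ e₂)
    (h₁ : H.ends e₁ = s(x, a)) (h₂ : H.ends e₂ = s(x, b))
    (hax : a ≠ x) (hbx : b ≠ x) (hab : a ≠ b)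
    (hdeg : ∀ e : H.Edge, x ∈ H.ends e → e = e₁ ∨ e = e₂) :
    Multigraph ↥(S \ {(x : V)}) where
  Edge := {e : H.Edge // e ≠ e₁ ∧ e ≠ e₂} ⊕ Unit
  ends e :=
    match e with
    | .inl e =>
        (sym2RestrictP (fun y : ↥S => y ≠ x) (H.ends e.1)
            (fun y hy hyx => by
              subst hyx
              rcases hdeg e.1 hy with h | h
              exacts [e.2.1 h, e.2.2 h])).map
          fun y => ⟨y.1.1, y.1.2, fun hh => y.2 (Subtype.ext hh)⟩
    | .inr _ =>
        s(⟨a.1, a.2, fun hh => hax (Subtype.ext hh)⟩,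
          ⟨b.1, b.2, fun hh => hbx (Subtype.ext hh)⟩)
  loopless := by
    rintro (e | e) hd
    · refine map_not_isDiag _ _ (fun y _ z _ h => ?_)
        (sym2RestrictP_not_isDiag _ _ _ (H.loopless e.1)) hd
      have hv := Subtype.ext_iff.mp h
      exact Subtype.ext (Subtype.ext hv)
    · rw [Sym2.mk_isDiag_iff] at hd
      have hv := Subtype.ext_iff.mp hd
      exact hab (Subtype.ext hv)
  edge_finite := by
    have := H.edge_finite
    exact inferInstance

/-- `SmoothSeq H K` : the multigraph `K` is obtained from `H` by a finite
sequence of smoothings of degree-two vertices. -/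
inductive SmoothSeq {V : Type} : ∀ {S T : Set V}, Multigraph ↥S → Multigraph ↥T → Prop
  | refl {S : Set V} (H : Multigraph ↥S) : SmoothSeq H H
  | step {S T : Set V} {H : Multigraph ↥S} {K : Multigraph ↥T}
      (x a b : ↥S) (e₁ e₂ : H.Edge) (hne : e₁ ≠ e₂)
      (h₁ : H.ends e₁ = s(x, a)) (h₂ : H.ends e₂ = s(x, b))
      (hax : a ≠ x) (hbx : b ≠ x) (hab : a ≠ b)
      (hdeg : ∀ e : H.Edge, x ∈ H.ends e → e = e₁ ∨ e = e₂) :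
      SmoothSeq (smoothAt H x a b e₁ e₂ hne h₁ h₂ hax hbx hab hdeg) K → SmoothSeq H K

/-- `G` is a 3-thick tree: it is obtained from a tree by replacing every tree
edge by three parallel edges. -/
def IsThreeThickTree (G : Multigraph V) : Prop :=
  ∃ T : SimpleGraph V, T.IsTree ∧
    ∃ f : G.Edge ≃ T.edgeSet × Fin 3, ∀ e : G.Edge, G.ends e = ((f e).1 : Sym2 V)

/-- The graphs obtainable from dumbbell graphs by cycle expansions and block
gluings (up to isomorphism). -/
inductive Synth3 : ∀ {V : Type}, Multigraph V → Prop
  | dumbbell : Synth3 dumbbell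
  | glue {V₁ V₂ : Type} {G₁ : Multigraph V₁} {G₂ : Multigraph V₂} (u₁ : V₁) (u₂ : V₂) :
      Synth3 G₁ → Synth3 G₂ → Synth3 (blockGlue G₁ G₂ u₁ u₂)
  | expand {V : Type} {G : Multigraph V} (u : V) {d d' : ℕ} (h2 : 2 ≤ d') (hdd : d' ≤ d)
      (ι : Fin d ≃ {e : G.Edge // u ∈ G.ends e}) :
      Synth3 G → Synth3 (G.cycleExpand u h2 hdd ι)
  | iso {V W : Type} {G : Multigraph V} {H : Multigraph W} :
      Synth3 G → Iso G H → Synth3 H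

/-- The graphs obtainable from 3-thick trees by block-respecting cycle
expansions (cycle expansions whose new cycle lies inside a single block of the
resulting graph), up to isomorphism. -/
inductive BRSynth : ∀ {V : Type}, Multigraph V → Prop
  | base {V : Type} {G : Multigraph V} : IsThreeThickTree G → BRSynth G
  | expand {V : Type} {G : Multigraph V} (u : V) {d d' : ℕ} (h2 : 2 ≤ d') (hdd : d' ≤ d)
      (ι : Fin d ≃ {e : G.Edge // u ∈ G.ends e})
      (hblock : ∃ B : Set ({x : V // x ≠ u} ⊕ Fin d'),
        (G.cycleExpand u h2 hdd ι).IsBlock B ∧ ∀ j : Fin d', Sum.inr j ∈ B) :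
      BRSynth G → BRSynth (G.cycleExpand u h2 hdd ι)
  | iso {V W : Type} {G : Multigraph V} {H : Multigraph W} :
      BRSynth G → Iso G H → BRSynth H

end Multigraph
namespace Multigraph

open scoped Classical

variable {V : Type}

namespace Walk

variable {G : Multigraph V}

def append : ∀ {u v w : V}, G.Walk u v → G.Walk v w → G.Walk u w
  | _, _, _, .nil _, q => q
  | _, _, _, .cons e he p, q => .cons e he (p.append q)

lemma edges_cons {u v w : V} (e : G.Edge) (he : G.ends e = s(u, v)) (p : G.Walk v w) :
    (Walk.cons e he p).edges = e :: p.edges := rfl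

lemma mem5_aux {α : Type} {l1 l2 l3 : List α} {a b g : α}
    (h : g ∈ a :: (l1 ++ (l2.reverse ++ b :: l3))) :
    g = a ∨ g ∈ l1 ∨ g ∈ l2 ∨ g = b ∨ g ∈ l3 := by
  simpa using h

lemma mem3_aux {α : Type} {l1 l2 : List α} {a g : α}
    (h : g ∈ l1.reverse ++ a :: l2) : g ∈ l1 ∨ g = a ∨ g ∈ l2 := by
  simpa using h

@[simp] lemma edges_append : ∀ {u v w : V} (p : G.Walk u v) (q : G.Walk v w),
    (p.append q).edges = p.edges ++ q.edges
  | _, _, _, .nil _, _ => rfl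
  | _, _, _, .cons e he p, q => by simp [append, edges, edges_append p q]

def reverse : ∀ {u v : V}, G.Walk u v → G.Walk v u
  | _, _, .nil v => .nil v
  | _, _, .cons e he p => p.reverse.append (.cons e (by rw [he, Sym2.eq_swap]) (.nil _))

@[simp] lemma edges_reverse : ∀ {u v : V} (p : G.Walk u v), p.reverse.edges = p.edges.reverse
  | _, _, .nil _ => rfl
  | _, _, .cons e he p => by simp [reverse, edges, edges_reverse p]

lemma start_mem_support : ∀ {u v : V} (p : G.Walk u v), u ∈ p.support
  | _, _, .nil _ => by simp [support]
  | _, _, .cons _ _ _ => by simp [support]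

lemma mem_support_of_edge : ∀ {u v : V} (p : G.Walk u v) {e : G.Edge} {x : V},
    e ∈ p.edges → x ∈ G.ends e → x ∈ p.support
  | _, _, .nil _, e, x => by simp [edges]
  | _, _, .cons e' he' p, e, x => fun hm hx => by
    rcases List.mem_cons.mp hm with h | h
    · subst h
      rw [he', Sym2.mem_iff] at hx
      rcases hx with rfl | rfl
      · simp [support]
      · exact List.mem_cons_of_mem _ (start_mem_support p)
    · exact List.mem_cons_of_mem _ (mem_support_of_edge p h hx)

end Walk

/-- reversing preserves `HasEDP`. -/
lemma HasEDP.symm {G : Multigraph V} {u v : V} {k : ℕ} (h : G.HasEDP u v k) :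
    G.HasEDP v u k := by
  obtain ⟨P, hnd, hdisj⟩ := h
  refine ⟨fun i => (P i).reverse, fun i => by simp [hnd i], fun i j hij e he => ?_⟩
  simp only [Walk.edges_reverse, List.mem_reverse] at he ⊢
  exact hdisj i j hij e he

lemma ne_of_ends_eq {G : Multigraph V} {e : G.Edge} {u x : V} (h : G.ends e = s(u, x)) :
    x ≠ u := by
  intro hx
  have := G.loopless e
  rw [h, hx, Sym2.mk_isDiag_iff] at this
  exact this rfl

lemma other_eq {G : Multigraph V} {e : G.Edge} {u x : V} (h : u ∈ G.ends e)
    (hx : G.ends e = s(u, x)) : Sym2.Mem.other h = x := by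
  have hs := (Sym2.other_spec h).trans hx
  rcases Sym2.eq_iff.mp hs with ⟨-, h2⟩ | ⟨h1, h2⟩
  · exact h2
  · exfalso
    have hl := G.loopless e
    rw [hx, ← h1, Sym2.mk_isDiag_iff] at hl
    exact hl rfl

lemma sym2RestrictP_pair {α : Type} (P : α → Prop) {a b : α}
    (h : ∀ x ∈ (s(a, b) : Sym2 α), P x) :
    sym2RestrictP P s(a, b) h = s(⟨a, h a (by simp)⟩, ⟨b, h b (by simp)⟩) := by
  simp only [sym2RestrictP, Sym2.map_pair_eq]
  rw [dif_pos (h a (by simp)), dif_pos (h b (by simp))]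

/-- Last-exit decomposition: a walk visiting `u` and ending at `w ≠ u` has a
suffix starting with an edge leaving `u` and thereafter avoiding `u`. -/
lemma exists_last_exit {G : Multigraph V} {u : V} :
    ∀ {x w : V} (p : G.Walk x w), u ∈ p.support → u ≠ w →
    ∃ (y : V) (e : G.Edge) (q : G.Walk y w), G.ends e = s(u, y) ∧
      u ∉ q.support ∧ (e :: q.edges).Sublist p.edges
  | _, _, .nil v => by
    intro hu hw
    simp [Walk.support] at hu
    exact absurd hu hw
  | x, w, .cons e' he' p' => by
    intro hu hw
    by_cases hmem : u ∈ p'.support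
    · obtain ⟨y, e, q, hq1, hq2, hq3⟩ := exists_last_exit p' hmem hw
      exact ⟨y, e, q, hq1, hq2, hq3.cons e'⟩
    · have hx : u = x := by
        simp [Walk.support] at hu
        rcases hu with h | h
        · exact h
        · exact absurd h hmem
      subst hx
      exact ⟨_, e', p', he', hmem, List.Sublist.refl _⟩

/-- The fan lemma: from `k` edge-disjoint trails from a degree-`k` vertex `u`
(with incident edges enumerated by `ι`) to `w`, one extracts, for each `i`, a
trail from the other endpoint `vv i` of the `i`-th edge at `u` to `w`
avoiding `u`, all pairwise edge-disjoint. -/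
lemma fan {G : Multigraph V} {u w : V} {k : ℕ}
    (ι : Fin k ≃ {e : G.Edge // u ∈ G.ends e}) (hne : u ≠ w)
    (h : G.HasEDP u w k) :
    ∃ (vv : Fin k → V) (Q : ∀ i : Fin k, G.Walk (vv i) w),
      (∀ i, G.ends (ι i).1 = s(u, vv i)) ∧
      (∀ i, u ∉ (Q i).support) ∧ (∀ i, (Q i).edges.Nodup) ∧
      (∀ i j, i ≠ j → ∀ e ∈ (Q i).edges, e ∉ (Q j).edges) := by
  obtain ⟨P, hnd, hdisj⟩ := h
  have H : ∀ i : Fin k, ∃ (y : V) (e : G.Edge) (q : G.Walk y w), G.ends e = s(u, y) ∧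
      u ∉ q.support ∧ (e :: q.edges).Sublist (P i).edges :=
    fun i => exists_last_exit (P i) (Walk.start_mem_support _) hne
  choose y e q he hq hsub using H
  have hmem : ∀ i, e i ∈ (P i).edges := fun i => (hsub i).mem (by simp)
  have hqmem : ∀ i g, g ∈ (q i).edges → g ∈ (P i).edges :=
    fun i g hg => (hsub i).mem (List.mem_cons_of_mem _ hg)
  have hinj : Function.Injective fun i =>
      (ι.symm ⟨e i, by rw [he i]; exact Sym2.mem_mk_left u (y i)⟩) := by
    intro i j hij
    by_contra hne'
    have hval : e i = e j := congrArg Subtype.val (ι.symm.injective hij)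
    exact hdisj i j hne' (e i) (hmem i) (hval ▸ hmem j)
  obtain ⟨hinj2, hsurj⟩ := Finite.injective_iff_bijective.mp hinj
  set σ := Equiv.ofBijective _ ⟨hinj2, hsurj⟩ with hσ
  have hkey : ∀ j : Fin k, (ι j).1 = e (σ.symm j) := by
    intro j
    have h1 : σ (σ.symm j) = j := σ.apply_symm_apply j
    have h2 : ι j = ⟨e (σ.symm j), by rw [he]; exact Sym2.mem_mk_left u _⟩ :=
      (congrArg ι h1.symm).trans (ι.apply_symm_apply _)
    rw [h2]
  refine ⟨fun j => y (σ.symm j), fun j => q (σ.symm j), ?_, fun j => hq _, fun j => ?_, ?_⟩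
  · intro j
    rw [hkey j]
    exact he _
  · exact ((hsub _).nodup (hnd _)).of_cons
  · intro i j hij g hgi hgj
    have hne2 : σ.symm i ≠ σ.symm j := fun hc => hij (by
      have := congrArg σ hc
      simpa using this)
    exact hdisj _ _ hne2 g (hqmem _ _ hgi) (hqmem _ _ hgj)

lemma sym2RestrictP_congr {α : Type} (P : α → Prop) {z z' : Sym2 α} (hzz : z = z')
    (h : ∀ x ∈ z, P x) :
    sym2RestrictP P z h = sym2RestrictP P z' (hzz ▸ h) := by subst hzz; rfl

section Glue

variable {V₁ V₂ : Type} {G₁ : Multigraph V₁} {G₂ : Multigraph V₂} {u₁ : V₁} {u₂ : V₂} {k : ℕ}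
  {ι₁ : Fin k ≃ {e : G₁.Edge // u₁ ∈ G₁.ends e}}
  {ι₂ : Fin k ≃ {e : G₂.Edge // u₂ ∈ G₂.ends e}}

local notation "GG" => vertexGlue G₁ G₂ u₁ u₂ ι₁ ι₂

lemma glue_ends_inl (e : {e : G₁.Edge // u₁ ∉ G₁.ends e}) {a b : V₁}
    (hab : G₁.ends e.1 = s(a, b)) (ha : a ≠ u₁) (hb : b ≠ u₁) :
    Multigraph.ends GG (Sum.inl e) = s(Sum.inl ⟨a, ha⟩, Sum.inl ⟨b, hb⟩) := by
  have h0 : Multigraph.ends GG (Sum.inl e) =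
      (sym2RestrictP (· ≠ u₁) (G₁.ends e.1) fun x hx hxe => e.2 (hxe ▸ hx)).map Sum.inl := rfl
  rw [h0, sym2RestrictP_congr _ hab, sym2RestrictP_pair, Sym2.map_pair_eq]

lemma glue_ends_inr (e : {e : G₂.Edge // u₂ ∉ G₂.ends e}) {a b : V₂}
    (hab : G₂.ends e.1 = s(a, b)) (ha : a ≠ u₂) (hb : b ≠ u₂) :
    Multigraph.ends GG (Sum.inr (Sum.inl e)) = s(Sum.inr ⟨a, ha⟩, Sum.inr ⟨b, hb⟩) := by
  have h0 : Multigraph.ends GG (Sum.inr (Sum.inl e)) =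
      (sym2RestrictP (· ≠ u₂) (G₂.ends e.1) fun x hx hxe => e.2 (hxe ▸ hx)).map Sum.inr := rfl
  rw [h0, sym2RestrictP_congr _ hab, sym2RestrictP_pair, Sym2.map_pair_eq]

lemma glue_ends_new (i : Fin k) {a : V₁} {b : V₂}
    (ha1 : G₁.ends (ι₁ i).1 = s(u₁, a)) (hb1 : G₂.ends (ι₂ i).1 = s(u₂, b))
    (ha : a ≠ u₁) (hb : b ≠ u₂) :
    Multigraph.ends GG (Sum.inr (Sum.inr i)) = s(Sum.inl ⟨a, ha⟩, Sum.inr ⟨b, hb⟩) := by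
  have h1 : Sym2.Mem.other (ι₁ i).2 = a := other_eq _ ha1
  have h2 : Sym2.Mem.other (ι₂ i).2 = b := other_eq _ hb1
  exact congrArg₂ (fun x y => s(Sum.inl x, Sum.inr y)) (Subtype.ext h1) (Subtype.ext h2)

lemma glue_ends_inl_shape (e : {e : G₁.Edge // u₁ ∉ G₁.ends e})
    {s t : {x : V₁ // x ≠ u₁} ⊕ {y : V₂ // y ≠ u₂}} (hg : Multigraph.ends GG (Sum.inl e) = s(s, t)) :
    ∃ (a b : {x : V₁ // x ≠ u₁}), s = Sum.inl a ∧ t = Sum.inl b ∧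
      G₁.ends e.1 = s(a.1, b.1) := by
  obtain ⟨x, y, hxy⟩ := exists_pair_eq (G₁.ends e.1)
  have hx : x ≠ u₁ := fun hc => e.2 (by rw [hxy, hc]; exact Sym2.mem_mk_left _ _)
  have hy : y ≠ u₁ := fun hc => e.2 (by rw [hxy, hc]; exact Sym2.mem_mk_right _ _)
  have h := (glue_ends_inl e hxy hx hy).symm.trans hg
  rcases Sym2.eq_iff.mp h with ⟨h1, h2⟩ | ⟨h1, h2⟩
  · exact ⟨⟨x, hx⟩, ⟨y, hy⟩, h1.symm, h2.symm, hxy⟩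
  · exact ⟨⟨y, hy⟩, ⟨x, hx⟩, h2.symm, h1.symm, by rw [hxy, Sym2.eq_swap]⟩

lemma glue_ends_inr_shape (e : {e : G₂.Edge // u₂ ∉ G₂.ends e})
    {s t : {x : V₁ // x ≠ u₁} ⊕ {y : V₂ // y ≠ u₂}}
    (hg : Multigraph.ends GG (Sum.inr (Sum.inl e)) = s(s, t)) :
    ∃ (a b : {y : V₂ // y ≠ u₂}), s = Sum.inr a ∧ t = Sum.inr b ∧
      G₂.ends e.1 = s(a.1, b.1) := by
  obtain ⟨x, y, hxy⟩ := exists_pair_eq (G₂.ends e.1)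
  have hx : x ≠ u₂ := fun hc => e.2 (by rw [hxy, hc]; exact Sym2.mem_mk_left _ _)
  have hy : y ≠ u₂ := fun hc => e.2 (by rw [hxy, hc]; exact Sym2.mem_mk_right _ _)
  have h := (glue_ends_inr e hxy hx hy).symm.trans hg
  rcases Sym2.eq_iff.mp h with ⟨h1, h2⟩ | ⟨h1, h2⟩
  · exact ⟨⟨x, hx⟩, ⟨y, hy⟩, h1.symm, h2.symm, hxy⟩
  · exact ⟨⟨y, hy⟩, ⟨x, hx⟩, h2.symm, h1.symm, by rw [hxy, Sym2.eq_swap]⟩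

lemma glue_ends_new_shape (i : Fin k)
    {s t : {x : V₁ // x ≠ u₁} ⊕ {y : V₂ // y ≠ u₂}}
    (hg : Multigraph.ends GG (Sum.inr (Sum.inr i)) = s(s, t)) :
    ∃ (a : {x : V₁ // x ≠ u₁}) (b : {y : V₂ // y ≠ u₂}),
      G₁.ends (ι₁ i).1 = s(u₁, a.1) ∧ G₂.ends (ι₂ i).1 = s(u₂, b.1) ∧
      ((s = Sum.inl a ∧ t = Sum.inr b) ∨ (s = Sum.inr b ∧ t = Sum.inl a)) := by
  have h0 : Multigraph.ends GG (Sum.inr (Sum.inr i)) =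
      s(Sum.inl ⟨Sym2.Mem.other (ι₁ i).2, other_ne (ι₁ i).2⟩,
        Sum.inr ⟨Sym2.Mem.other (ι₂ i).2, other_ne (ι₂ i).2⟩) := rfl
  have h := h0.symm.trans hg
  refine ⟨⟨Sym2.Mem.other (ι₁ i).2, other_ne (ι₁ i).2⟩,
    ⟨Sym2.Mem.other (ι₂ i).2, other_ne (ι₂ i).2⟩,
    (Sym2.other_spec (ι₁ i).2).symm, (Sym2.other_spec (ι₂ i).2).symm, ?_⟩
  rcases Sym2.eq_iff.mp h with ⟨h1, h2⟩ | ⟨h1, h2⟩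
  · exact Or.inl ⟨h1.symm, h2.symm⟩
  · exact Or.inr ⟨h2.symm, h1.symm⟩

lemma lift1_exists : ∀ {x y : V₁} (p : G₁.Walk x y) (hx : x ≠ u₁) (hy : y ≠ u₁),
    (∀ z ∈ p.support, z ≠ u₁) →
    ∃ q : Multigraph.Walk GG (Sum.inl ⟨x, hx⟩) (Sum.inl ⟨y, hy⟩),
      (∀ g ∈ q.edges, ∃ e', g = Sum.inl e' ∧ e'.1 ∈ p.edges) ∧
      (p.edges.Nodup → q.edges.Nodup)
  | _, _, .nil v, hx, hy, _ =>
      ⟨.nil _, by simp [Walk.edges], fun _ => by simp [Walk.edges]⟩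
  | _, _, .cons (v := v) e he p', hx, hy, hp => by
      have hv : v ≠ u₁ := hp v (List.mem_cons_of_mem _ (Walk.start_mem_support p'))
      have he1 : u₁ ∉ G₁.ends e := by
        rw [he, Sym2.mem_iff]
        rintro (h | h)
        exacts [hx h.symm, hv h.symm]
      obtain ⟨q', hq1, hq2⟩ := lift1_exists p' hv hy
        (fun z hz => hp z (List.mem_cons_of_mem _ hz))
      refine ⟨.cons (Sum.inl ⟨e, he1⟩) (glue_ends_inl _ he hx hv) q', ?_, ?_⟩
      · intro g hg
        rcases List.mem_cons.mp hg with rfl | hg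
        · exact ⟨⟨e, he1⟩, rfl, List.mem_cons_self⟩
        · obtain ⟨e', h1, h2⟩ := hq1 g hg
          exact ⟨e', h1, List.mem_cons_of_mem _ h2⟩
      · intro hnd
        apply List.nodup_cons.mpr
        refine ⟨fun hc => ?_, hq2 (List.nodup_cons.mp hnd).2⟩
        obtain ⟨e', h1, h2⟩ := hq1 _ hc
        have : e = e'.1 := congrArg (fun g => match g with
          | Sum.inl e'' => e''.1
          | _ => e) h1
        exact (List.nodup_cons.mp hnd).1 (this ▸ h2)

lemma lift2_exists : ∀ {x y : V₂} (p : G₂.Walk x y) (hx : x ≠ u₂) (hy : y ≠ u₂),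
    (∀ z ∈ p.support, z ≠ u₂) →
    ∃ q : Multigraph.Walk GG (Sum.inr ⟨x, hx⟩) (Sum.inr ⟨y, hy⟩),
      (∀ g ∈ q.edges, ∃ e', g = Sum.inr (Sum.inl e') ∧ e'.1 ∈ p.edges) ∧
      (p.edges.Nodup → q.edges.Nodup)
  | _, _, .nil v, hx, hy, _ =>
      ⟨.nil _, by simp [Walk.edges], fun _ => by simp [Walk.edges]⟩
  | _, _, .cons (v := v) e he p', hx, hy, hp => by
      have hv : v ≠ u₂ := hp v (List.mem_cons_of_mem _ (Walk.start_mem_support p'))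
      have he1 : u₂ ∉ G₂.ends e := by
        rw [he, Sym2.mem_iff]
        rintro (h | h)
        exacts [hx h.symm, hv h.symm]
      obtain ⟨q', hq1, hq2⟩ := lift2_exists p' hv hy
        (fun z hz => hp z (List.mem_cons_of_mem _ hz))
      refine ⟨.cons (Sum.inr (Sum.inl ⟨e, he1⟩)) (glue_ends_inr _ he hx hv) q', ?_, ?_⟩
      · intro g hg
        rcases List.mem_cons.mp hg with rfl | hg
        · exact ⟨⟨e, he1⟩, rfl, List.mem_cons_self⟩
        · obtain ⟨e', h1, h2⟩ := hq1 g hg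
          exact ⟨e', h1, List.mem_cons_of_mem _ h2⟩
      · intro hnd
        apply List.nodup_cons.mpr
        refine ⟨fun hc => ?_, hq2 (List.nodup_cons.mp hnd).2⟩
        obtain ⟨e', h1, h2⟩ := hq1 _ hc
        have : e = e'.1 := congrArg (fun g => match g with
          | Sum.inr (Sum.inl e'') => e''.1
          | _ => e) h1
        exact (List.nodup_cons.mp hnd).1 (this ▸ h2)

lemma surgery_exists (w₂ : V₂) (hw₂ : w₂ ≠ u₂) (vv : Fin k → V₂)
    (T : ∀ i : Fin k, G₂.Walk (vv i) w₂)
    (hvv : ∀ i, G₂.ends (ι₂ i).1 = s(u₂, vv i))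
    (hTav : ∀ i, u₂ ∉ (T i).support)
    (hTnd : ∀ i, (T i).edges.Nodup)
    (hTdisj : ∀ i j, i ≠ j → ∀ e ∈ (T i).edges, e ∉ (T j).edges) :
    ∀ (n : ℕ) {x y : V₁} (p : G₁.Walk x y) (hx : x ≠ u₁) (hy : y ≠ u₁),
      p.edges.length ≤ n → p.edges.Nodup →
      ∃ q : Multigraph.Walk GG (Sum.inl ⟨x, hx⟩) (Sum.inl ⟨y, hy⟩),
        q.edges.Nodup ∧
        ∀ g ∈ q.edges,
          (∃ e', g = Sum.inl e' ∧ e'.1 ∈ p.edges) ∨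
          (∃ i, g = Sum.inr (Sum.inr i) ∧ (ι₁ i).1 ∈ p.edges) ∨
          (∃ i e₂, g = Sum.inr (Sum.inl e₂) ∧ (ι₁ i).1 ∈ p.edges ∧ e₂.1 ∈ (T i).edges) := by
  intro n
  induction n with
  | zero =>
    intro x y p hx hy hlen hnd
    cases p with
    | nil v => exact ⟨.nil _, by simp [Walk.edges], by simp [Walk.edges]⟩
    | cons e he p' => simp [Walk.edges] at hlen
  | succ n ih =>
    intro x y p hx hy hlen hnd
    cases p with
    | nil v => exact ⟨.nil _, by simp [Walk.edges], by simp [Walk.edges]⟩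
    | @cons _ v _ e he p' =>
      by_cases hv : v = u₁
      · subst v
        cases p' with
        | nil => exact absurd rfl hy
        | @cons _ v' _ f hf p'' =>
          have hv' : v' ≠ u₁ := ne_of_ends_eq hf
          have hex : u₁ ∈ G₁.ends e := by rw [he]; exact Sym2.mem_mk_right _ _
          have hfx : u₁ ∈ G₁.ends f := by rw [hf]; exact Sym2.mem_mk_left _ _
          set i := ι₁.symm ⟨e, hex⟩ with hi
          set j := ι₁.symm ⟨f, hfx⟩ with hj
          have hie : (ι₁ i).1 = e := congrArg Subtype.val (ι₁.apply_symm_apply _)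
          have hjf : (ι₁ j).1 = f := congrArg Subtype.val (ι₁.apply_symm_apply _)
          have hnd1 := List.nodup_cons.mp hnd
          have hnd2 := List.nodup_cons.mp hnd1.2
          have hef : e ≠ f := fun hc => hnd1.1 (hc ▸ List.mem_cons_self)
          have hefp : e ∉ p''.edges := fun hc => hnd1.1 (List.mem_cons_of_mem _ hc)
          have hfp : f ∉ p''.edges := hnd2.1
          have hij : i ≠ j := fun hc => hef (by rw [← hie, ← hjf, hc])
          have hvvi : vv i ≠ u₂ := ne_of_ends_eq (hvv i)
          have hvvj : vv j ≠ u₂ := ne_of_ends_eq (hvv j)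
          have ha1 : G₁.ends (ι₁ i).1 = s(u₁, x) := by rw [hie, he, Sym2.eq_swap]
          have hb1 : G₁.ends (ι₁ j).1 = s(u₁, v') := by rw [hjf, hf]
          obtain ⟨qi, hqi1, hqi2⟩ := lift2_exists (T i) hvvi hw₂
            (fun z hz hc => hTav i (hc ▸ hz))
          obtain ⟨qj, hqj1, hqj2⟩ := lift2_exists (T j) hvvj hw₂
            (fun z hz hc => hTav j (hc ▸ hz))
          obtain ⟨q'', hq1, hq2⟩ := ih p'' hv' hy
            (by simp [Walk.edges] at hlen ⊢; omega) hnd2.2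
          refine ⟨Walk.cons (Sum.inr (Sum.inr i)) (glue_ends_new i ha1 (hvv i) hx hvvi)
            (qi.append ((qj.reverse).append (Walk.cons (Sum.inr (Sum.inr j))
              ((glue_ends_new j hb1 (hvv j) hv' hvvj).trans (Sym2.eq_swap)) q''))), ?_, ?_⟩
          · -- Nodup
            have hmemp := hq2
            simp only [Walk.edges, Walk.edges_append, Walk.edges_reverse]
            apply List.nodup_cons.mpr
            constructor
            · intro hc
              rcases List.mem_append.mp hc with hgi | hgR
              · obtain ⟨e₂, hc2, -⟩ := hqi1 _ hgi
                exact nomatch Sum.inr_injective hc2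
              rcases List.mem_append.mp hgR with hgj | hgC
              · obtain ⟨e₂, hc2, -⟩ := hqj1 _ (List.mem_reverse.mp hgj)
                exact nomatch Sum.inr_injective hc2
              rcases List.mem_cons.mp hgC with hc2 | hg
              · exact hij (Sum.inr_injective (Sum.inr_injective hc2))
              rcases hmemp _ hg with ⟨e', hc2, -⟩ | ⟨i', hc2, hm⟩ | ⟨i', e₂, hc2, -, -⟩
              · exact nomatch hc2
              · have : i = i' := Sum.inr_injective (Sum.inr_injective hc2)
                exact hefp (by rw [← hie, this]; exact hm)
              · exact nomatch Sum.inr_injective hc2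
            rw [List.nodup_append]
            refine ⟨hqi2 (hTnd i), ?_, ?_⟩
            · rw [List.nodup_append]
              refine ⟨List.nodup_reverse.mpr (hqj2 (hTnd j)), ?_, ?_⟩
              · apply List.nodup_cons.mpr
                constructor
                · intro hg
                  rcases hmemp _ hg with ⟨e', hc2, -⟩ | ⟨i', hc2, hm⟩ | ⟨i', e₂, hc2, -, -⟩
                  · exact nomatch hc2
                  · have : j = i' := Sum.inr_injective (Sum.inr_injective hc2)
                    exact hfp (by rw [← hjf, this]; exact hm)
                  · exact nomatch Sum.inr_injective hc2
                · exact hq1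
              · rintro g hgj _ hg rfl
                obtain ⟨e₂, rfl, hm⟩ := hqj1 _ (List.mem_reverse.mp hgj)
                rcases List.mem_cons.mp hg with hc2 | hg
                · exact nomatch Sum.inr_injective hc2
                rcases hmemp _ hg with ⟨e', hc2, -⟩ | ⟨i', hc2, -⟩ | ⟨i', e₃, hc2, hm1, hm2⟩
                · exact nomatch hc2
                · exact nomatch Sum.inr_injective hc2
                · have he23 : e₂ = e₃ := Sum.inl_injective (Sum.inr_injective hc2)
                  by_cases hji' : j = i'
                  · exact hfp (by rw [← hjf, hji']; exact hm1)
                  · exact hTdisj j i' hji' _ hm (he23 ▸ hm2)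
            · rintro g hgi _ hg rfl
              obtain ⟨e₂, rfl, hm⟩ := hqi1 _ hgi
              rcases List.mem_append.mp hg with hgj | hg
              · obtain ⟨e₃, hc2, hm3⟩ := hqj1 _ (List.mem_reverse.mp hgj)
                have : e₂ = e₃ := Sum.inl_injective (Sum.inr_injective hc2)
                exact hTdisj i j hij _ hm (this ▸ hm3)
              rcases List.mem_cons.mp hg with hc2 | hg
              · exact nomatch Sum.inr_injective hc2
              rcases hmemp _ hg with ⟨e', hc2, -⟩ | ⟨i', hc2, -⟩ | ⟨i', e₃, hc2, hm1, hm2⟩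
              · exact nomatch hc2
              · exact nomatch Sum.inr_injective hc2
              · have he23 : e₂ = e₃ := Sum.inl_injective (Sum.inr_injective hc2)
                by_cases hii' : i = i'
                · exact hefp (by rw [← hie, hii']; exact hm1)
                · exact hTdisj i i' hii' _ hm (he23 ▸ hm2)
          · -- membership characterization
            intro g hg
            simp only [Walk.edges, Walk.edges_append, Walk.edges_reverse] at hg
            replace hg := Walk.mem5_aux hg
            have hpe : ∀ g', g' ∈ p''.edges → g' ∈ (Walk.cons e he (Walk.cons f hf p'')).edges :=
              fun g' h => List.mem_cons_of_mem _ (List.mem_cons_of_mem _ h)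
            have hee : e ∈ (Walk.cons e he (Walk.cons f hf p'')).edges := List.mem_cons_self
            have hfe : f ∈ (Walk.cons e he (Walk.cons f hf p'')).edges :=
              List.mem_cons_of_mem _ (List.mem_cons_self)
            rcases hg with rfl | hgi | hgj | rfl | hg''
            · exact Or.inr (Or.inl ⟨i, rfl, by rw [hie]; exact hee⟩)
            · obtain ⟨e₂, rfl, hm⟩ := hqi1 _ hgi
              exact Or.inr (Or.inr ⟨i, e₂, rfl, by rw [hie]; exact hee, hm⟩)
            · obtain ⟨e₂, rfl, hm⟩ := hqj1 _ hgj
              exact Or.inr (Or.inr ⟨j, e₂, rfl, by rw [hjf]; exact hfe, hm⟩)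
            · exact Or.inr (Or.inl ⟨j, rfl, by rw [hjf]; exact hfe⟩)
            · rcases hq2 _ hg'' with ⟨e', hc, hm⟩ | ⟨i', hc, hm⟩ | ⟨i', e₂, hc, hm1, hm2⟩
              · exact Or.inl ⟨e', hc, hpe _ hm⟩
              · exact Or.inr (Or.inl ⟨i', hc, hpe _ hm⟩)
              · exact Or.inr (Or.inr ⟨i', e₂, hc, hpe _ hm1, hm2⟩)
      · -- ordinary edge inside G₁
        have he1 : u₁ ∉ G₁.ends e := by
          rw [he, Sym2.mem_iff]
          rintro (h | h)
          exacts [hx h.symm, hv h.symm]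
        obtain ⟨q', hq1, hq2⟩ := ih p' hv hy
          (by simp [Walk.edges] at hlen ⊢; omega) (List.nodup_cons.mp hnd).2
        refine ⟨Walk.cons (Sum.inl ⟨e, he1⟩) (glue_ends_inl _ he hx hv) q', ?_, ?_⟩
        · apply List.nodup_cons.mpr
          refine ⟨fun hc => ?_, hq1⟩
          rcases hq2 _ hc with ⟨e', hc2, hm⟩ | ⟨i', hc2, -⟩ | ⟨i', e₂, hc2, -, -⟩
          · have : e = e'.1 := by
              have h3 : (⟨e, he1⟩ : {e : G₁.Edge // u₁ ∉ G₁.ends e}) = e' :=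
                Sum.inl_injective hc2
              rw [← h3]
            exact (List.nodup_cons.mp hnd).1 (this ▸ hm)
          · exact nomatch hc2
          · exact nomatch hc2
        · intro g hg
          rcases List.mem_cons.mp hg with rfl | hg
          · exact Or.inl ⟨⟨e, he1⟩, rfl, List.mem_cons_self⟩
          · rcases hq2 _ hg with ⟨e', hc, hm⟩ | ⟨i', hc, hm⟩ | ⟨i', e₂, hc, hm1, hm2⟩
            · exact Or.inl ⟨e', hc, List.mem_cons_of_mem _ hm⟩
            · exact Or.inr (Or.inl ⟨i', hc, List.mem_cons_of_mem _ hm⟩)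
            · exact Or.inr (Or.inr ⟨i', e₂, hc, List.mem_cons_of_mem _ hm1, hm2⟩)

lemma proj1_exists : ∀ {s t : {x : V₁ // x ≠ u₁} ⊕ {y : V₂ // y ≠ u₂}}
    (p : Multigraph.Walk GG s t),
    ∃ q : G₁.Walk (Sum.elim (fun a => a.1) (fun _ => u₁) s)
        (Sum.elim (fun a => a.1) (fun _ => u₁) t),
      q.edges = p.edges.filterMap (fun g => match g with
        | Sum.inl e' => some e'.1
        | Sum.inr (Sum.inl _) => none
        | Sum.inr (Sum.inr i) => some (ι₁ i).1)
  | _, _, .nil v => ⟨.nil _, by simp [Walk.edges]⟩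
  | _, _, .cons g hg p' => by
      obtain ⟨q', hq'⟩ := proj1_exists p'
      obtain (e' | e₂ | i) := g
      · obtain ⟨a, b, hs, ht, hab⟩ := glue_ends_inl_shape e' hg
        subst hs; subst ht
        exact ⟨.cons e'.1 hab q', (congrArg (List.cons e'.1) hq').trans rfl⟩
      · obtain ⟨a, b, hs, ht, -⟩ := glue_ends_inr_shape e₂ hg
        subst hs; subst ht
        exact ⟨q', hq'.trans rfl⟩
      · obtain ⟨a, b, ha1, hb1, hor⟩ := glue_ends_new_shape i hg
        rcases hor with ⟨hs, ht⟩ | ⟨hs, ht⟩ <;> subst hs <;> subst ht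
        · exact ⟨.cons (ι₁ i).1 (by rw [ha1, Sym2.eq_swap]; rfl) q',
            by exact (congrArg (List.cons (ι₁ i).1) hq').trans rfl⟩
        · exact ⟨.cons (ι₁ i).1 (by rw [ha1]; rfl) q',
            by exact (congrArg (List.cons (ι₁ i).1) hq').trans rfl⟩

lemma glue_walk_isLeft : ∀ {s t : {x : V₁ // x ≠ u₁} ⊕ {y : V₂ // y ≠ u₂}}
    (p : Multigraph.Walk GG s t),
    (∀ i : Fin k, Sum.inr (Sum.inr i) ∉ p.edges) → s.isLeft = t.isLeft
  | _, _, .nil v, _ => rfl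
  | _, _, .cons g hg p', h => by
      have hrec := glue_walk_isLeft p' (fun i hi => h i (List.mem_cons_of_mem _ hi))
      obtain (e' | e₂ | i) := g
      · obtain ⟨a, b, hs, ht, -⟩ := glue_ends_inl_shape e' hg
        subst hs; subst ht
        simpa using hrec
      · obtain ⟨a, b, hs, ht, -⟩ := glue_ends_inr_shape e₂ hg
        subst hs; subst ht
        simpa using hrec
      · exact absurd (List.mem_cons_self) (h i)

/-- Lower bound, both endpoints on the `G₁` side. -/
lemma glue_hasEDP_inl_inl (h₁ : G₁.ExactlyEdgeConnected k) (h₂ : G₂.ExactlyEdgeConnected k)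
    (a b : {x : V₁ // x ≠ u₁}) (hab : a ≠ b) :
    Multigraph.HasEDP GG (Sum.inl a) (Sum.inl b) k := by
  have : Nontrivial V₂ := h₂.1
  obtain ⟨w₂, hw₂⟩ := exists_ne u₂
  obtain ⟨vv, T, hvv, hTav, hTnd, hTdisj⟩ := fan ι₂ (Ne.symm hw₂) (h₂.2 u₂ w₂ (Ne.symm hw₂)).1
  have hab' : a.1 ≠ b.1 := fun hc => hab (Subtype.ext hc)
  obtain ⟨P, hPnd, hPdisj⟩ := (h₁.2 a.1 b.1 hab').1
  have H : ∀ i : Fin k,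
      ∃ q : Multigraph.Walk GG (Sum.inl ⟨a.1, a.2⟩) (Sum.inl ⟨b.1, b.2⟩),
        q.edges.Nodup ∧
        ∀ g ∈ q.edges,
          (∃ e', g = Sum.inl e' ∧ e'.1 ∈ (P i).edges) ∨
          (∃ i', g = Sum.inr (Sum.inr i') ∧ (ι₁ i').1 ∈ (P i).edges) ∨
          (∃ i' e₂, g = Sum.inr (Sum.inl e₂) ∧ (ι₁ i').1 ∈ (P i).edges ∧
            e₂.1 ∈ (T i').edges) :=
    fun i => surgery_exists w₂ hw₂ vv T hvv hTav hTnd hTdisj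
      (P i).edges.length (P i) a.2 b.2 le_rfl (hPnd i)
  choose Q hQnd hQmem using H
  refine ⟨Q, hQnd, fun i j hij g hgi hgj => ?_⟩
  rcases hQmem i _ hgi with ⟨e', rfl, hm1⟩ | ⟨i', rfl, hm1⟩ | ⟨i', e₂, rfl, hm1, hm2⟩ <;>
    rcases hQmem j _ hgj with ⟨f', hc, hn1⟩ | ⟨j', hc, hn1⟩ | ⟨j', f₂, hc, hn1, hn2⟩
  · have : e' = f' := Sum.inl_injective hc
    exact hPdisj i j hij _ hm1 (this ▸ hn1)
  · exact nomatch hc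
  · exact nomatch hc
  · exact nomatch hc
  · have : i' = j' := Sum.inr_injective (Sum.inr_injective hc)
    exact hPdisj i j hij _ hm1 (this ▸ hn1)
  · exact nomatch Sum.inr_injective hc
  · exact nomatch hc
  · exact nomatch Sum.inr_injective hc
  · have hf : e₂ = f₂ := Sum.inl_injective (Sum.inr_injective hc)
    by_cases hii : i' = j'
    · exact hPdisj i j hij _ hm1 (hii ▸ hn1)
    · exact hTdisj i' j' hii _ hm2 (hf ▸ hn2)

/-- Lower bound, endpoints on opposite sides. -/
lemma glue_hasEDP_inl_inr (h₁ : G₁.ExactlyEdgeConnected k) (h₂ : G₂.ExactlyEdgeConnected k)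
    (a : {x : V₁ // x ≠ u₁}) (b : {y : V₂ // y ≠ u₂}) :
    Multigraph.HasEDP GG (Sum.inl a) (Sum.inr b) k := by
  obtain ⟨vv1, R1, hvv1, hR1av, hR1nd, hR1disj⟩ :=
    fan ι₁ (Ne.symm a.2) (h₁.2 u₁ a.1 (Ne.symm a.2)).1
  obtain ⟨vv2, R2, hvv2, hR2av, hR2nd, hR2disj⟩ :=
    fan ι₂ (Ne.symm b.2) (h₂.2 u₂ b.1 (Ne.symm b.2)).1
  have H1 : ∀ j : Fin k,
      ∃ q : Multigraph.Walk GG (Sum.inl ⟨vv1 j, ne_of_ends_eq (hvv1 j)⟩)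
          (Sum.inl ⟨a.1, a.2⟩),
        (∀ g ∈ q.edges, ∃ e', g = Sum.inl e' ∧ e'.1 ∈ (R1 j).edges) ∧ q.edges.Nodup :=
    fun j => by
      obtain ⟨q, hq1, hq2⟩ := lift1_exists (R1 j) (ne_of_ends_eq (hvv1 j)) a.2
        (fun z hz hc => hR1av j (hc ▸ hz))
      exact ⟨q, hq1, hq2 (hR1nd j)⟩
  have H2 : ∀ j : Fin k,
      ∃ q : Multigraph.Walk GG (Sum.inr ⟨vv2 j, ne_of_ends_eq (hvv2 j)⟩)
          (Sum.inr ⟨b.1, b.2⟩),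
        (∀ g ∈ q.edges, ∃ e', g = Sum.inr (Sum.inl e') ∧ e'.1 ∈ (R2 j).edges) ∧
          q.edges.Nodup :=
    fun j => by
      obtain ⟨q, hq1, hq2⟩ := lift2_exists (R2 j) (ne_of_ends_eq (hvv2 j)) b.2
        (fun z hz hc => hR2av j (hc ▸ hz))
      exact ⟨q, hq1, hq2 (hR2nd j)⟩
  choose q1 hq1mem hq1nd using H1
  choose q2 hq2mem hq2nd using H2
  refine ⟨fun j => (q1 j).reverse.append (.cons (Sum.inr (Sum.inr j))
    (glue_ends_new j (hvv1 j) (hvv2 j) (ne_of_ends_eq (hvv1 j)) (ne_of_ends_eq (hvv2 j)))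
    (q2 j)), fun j => ?_, fun i j hij g hgi hgj => ?_⟩
  · -- Nodup
    simp only [Walk.edges, Walk.edges_append, Walk.edges_reverse]
    rw [List.nodup_append]
    refine ⟨List.nodup_reverse.mpr (hq1nd j), ?_, ?_⟩
    · apply List.nodup_cons.mpr
      refine ⟨fun hc => ?_, hq2nd j⟩
      obtain ⟨e', hc2, -⟩ := hq2mem j _ hc
      exact nomatch Sum.inr_injective hc2
    · rintro g hg1 _ hg2 rfl
      obtain ⟨e', rfl, -⟩ := hq1mem j _ (List.mem_reverse.mp hg1)
      rcases List.mem_cons.mp hg2 with hc | hg2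
      · exact nomatch hc
      · obtain ⟨f', hc, -⟩ := hq2mem j _ hg2
        exact nomatch hc
  · -- pairwise disjoint
    simp only [Walk.edges, Walk.edges_append, Walk.edges_reverse] at hgi hgj
    replace hgi := Walk.mem3_aux hgi
    replace hgj := Walk.mem3_aux hgj
    rcases hgi with hg1 | rfl | hg1
    · obtain ⟨e', rfl, hm⟩ := hq1mem i _ hg1
      rcases hgj with hg2 | hc | hg2
      · obtain ⟨f', hc, hn⟩ := hq1mem j _ hg2
        have : e' = f' := Sum.inl_injective hc
        exact hR1disj i j hij _ hm (this ▸ hn)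
      · exact nomatch hc
      · obtain ⟨f', hc, -⟩ := hq2mem j _ hg2
        exact nomatch hc
    · rcases hgj with hg2 | hc | hg2
      · obtain ⟨f', hc, -⟩ := hq1mem j _ hg2
        exact nomatch hc
      · exact hij (Sum.inr_injective (Sum.inr_injective hc))
      · obtain ⟨f', hc, -⟩ := hq2mem j _ hg2
        exact nomatch Sum.inr_injective hc
    · obtain ⟨e', rfl, hm⟩ := hq2mem i _ hg1
      rcases hgj with hg2 | hc | hg2
      · obtain ⟨f', hc, -⟩ := hq1mem j _ hg2
        exact nomatch hc
      · exact nomatch Sum.inr_injective hc.symm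
      · obtain ⟨f', hc, hn⟩ := hq2mem j _ hg2
        have : e' = f' := Sum.inl_injective (Sum.inr_injective hc)
        exact hR2disj i j hij _ hm (this ▸ hn)

/-- Upper bound, both endpoints on the `G₁` side. -/
lemma glue_not_hasEDP_inl_inl (h₁ : G₁.ExactlyEdgeConnected k)
    (a b : {x : V₁ // x ≠ u₁}) (hab : a ≠ b) :
    ¬ Multigraph.HasEDP GG (Sum.inl a) (Sum.inl b) (k + 1) := by
  rintro ⟨P, hPnd, hPdisj⟩
  choose Q hQ using fun i => proj1_exists (ι₁ := ι₁) (ι₂ := ι₂) (P i)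
  have hinj : ∀ (g g' : Multigraph.Edge GG) (x : G₁.Edge),
      (match g with
        | Sum.inl e' => some e'.1
        | Sum.inr (Sum.inl _) => none
        | Sum.inr (Sum.inr i) => some (ι₁ i).1) = some x →
      (match g' with
        | Sum.inl e' => some e'.1
        | Sum.inr (Sum.inl _) => none
        | Sum.inr (Sum.inr i) => some (ι₁ i).1) = some x → g = g' := by
    rintro (e | e | i) (e' | e' | i') x h1 h2 <;> simp at h1 h2
    · exact congrArg Sum.inl (Subtype.ext (h1.trans h2.symm))
    · exact absurd (by rw [h1.trans h2.symm]; exact (ι₁ i').2) e.2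
    · exact absurd (by rw [h2.trans h1.symm]; exact (ι₁ i).2) e'.2
    · have : ι₁ i = ι₁ i' := Subtype.ext (h1.trans h2.symm)
      exact congrArg (fun z => Sum.inr (Sum.inr z)) (ι₁.injective this)
  apply (h₁.2 a.1 b.1 (fun hc => hab (Subtype.ext hc))).2
  refine ⟨Q, fun i => ?_, fun i j hij g hgi hgj => ?_⟩
  · refine (congrArg List.Nodup (hQ i)).mpr ?_
    exact List.Nodup.filterMap (fun g g' x h1 h2 => hinj g g' x h1 h2) (hPnd i)
  · replace hgi := (congrArg (g ∈ ·) (hQ i)).mp hgi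
    replace hgj := (congrArg (g ∈ ·) (hQ j)).mp hgj
    obtain ⟨g1, hg1, hpg1⟩ := List.mem_filterMap.mp hgi
    obtain ⟨g2, hg2, hpg2⟩ := List.mem_filterMap.mp hgj
    have : g1 = g2 := hinj g1 g2 g hpg1 hpg2
    exact hPdisj i j hij g1 hg1 (this ▸ hg2)

/-- Upper bound, endpoints on opposite sides: pigeonhole on the `k` new edges. -/
lemma glue_not_hasEDP_inl_inr (a : {x : V₁ // x ≠ u₁}) (b : {y : V₂ // y ≠ u₂}) :
    ¬ Multigraph.HasEDP GG (Sum.inl a) (Sum.inr b) (k + 1) := by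
  rintro ⟨P, hPnd, hPdisj⟩
  have hcross : ∀ t : Fin (k + 1), ∃ i : Fin k, Sum.inr (Sum.inr i) ∈ (P t).edges := by
    intro t
    by_contra hno
    push_neg at hno
    have := glue_walk_isLeft (P t) hno
    simp at this
  choose f hf using hcross
  have hinjf : Function.Injective f := fun t t' h => by
    by_contra hne
    exact hPdisj t t' hne _ (hf t) (h ▸ hf t')
  have := Fintype.card_le_of_injective f hinjf
  simp at this

end Glue

def Iso.walkMap {V W : Type} {G : Multigraph V} {H : Multigraph W} (φ : Iso G H) :
    ∀ {u v : V}, G.Walk u v → H.Walk (φ.vmap u) (φ.vmap v)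
  | _, _, .nil v => .nil _
  | _, _, .cons e he p => .cons (φ.emap e)
      (by rw [φ.ends_vmap, he, Sym2.map_pair_eq]) (φ.walkMap p)

lemma Iso.walkMap_edges {V W : Type} {G : Multigraph V} {H : Multigraph W} (φ : Iso G H) :
    ∀ {u v : V} (p : G.Walk u v), (φ.walkMap p).edges = p.edges.map φ.emap
  | _, _, .nil v => rfl
  | _, _, .cons e he p => by simp [Iso.walkMap, Walk.edges, φ.walkMap_edges p]

lemma Iso.hasEDP {V W : Type} {G : Multigraph V} {H : Multigraph W} (φ : Iso G H)
    {u v : V} {k : ℕ} (h : G.HasEDP u v k) : H.HasEDP (φ.vmap u) (φ.vmap v) k := by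
  obtain ⟨P, hnd, hdisj⟩ := h
  refine ⟨fun i => φ.walkMap (P i), fun i => ?_, fun i j hij g hgi hgj => ?_⟩
  · rw [φ.walkMap_edges]
    exact (hnd i).map φ.emap.injective
  · rw [φ.walkMap_edges] at hgi hgj
    obtain ⟨g1, hg1, hpg1⟩ := List.mem_map.mp hgi
    obtain ⟨g2, hg2, hpg2⟩ := List.mem_map.mp hgj
    have : g1 = g2 := φ.emap.injective (hpg1.trans hpg2.symm)
    exact hdisj i j hij g1 hg1 (this ▸ hg2)

def Iso.symm' {V W : Type} {G : Multigraph V} {H : Multigraph W} (φ : Iso G H) : Iso H G where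
  vmap := φ.vmap.symm
  emap := φ.emap.symm
  ends_vmap := fun e => by
    have h := φ.ends_vmap (φ.emap.symm e)
    rw [φ.emap.apply_symm_apply] at h
    rw [h, Sym2.map_map]
    have h2 : (⇑φ.vmap.symm ∘ ⇑φ.vmap) = id := funext fun x => φ.vmap.symm_apply_apply x
    rw [h2, Sym2.map_id]
    rfl

/-- The vertex gluing is symmetric in the two graphs, up to isomorphism. -/
def glueSwap {V₁ V₂ : Type} (G₁ : Multigraph V₁) (G₂ : Multigraph V₂)
    (u₁ : V₁) (u₂ : V₂) {k : ℕ}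
    (ι₁ : Fin k ≃ {e : G₁.Edge // u₁ ∈ G₁.ends e})
    (ι₂ : Fin k ≃ {e : G₂.Edge // u₂ ∈ G₂.ends e}) :
    Iso (vertexGlue G₂ G₁ u₂ u₁ ι₂ ι₁) (vertexGlue G₁ G₂ u₁ u₂ ι₁ ι₂) where
  vmap := Equiv.sumComm _ _
  emap := { toFun := fun g => match g with
              | .inl e => .inr (.inl e)
              | .inr (.inl e) => .inl e
              | .inr (.inr i) => .inr (.inr i)
            invFun := fun g => match g with
              | .inl e => .inr (.inl e)
              | .inr (.inl e) => .inl e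
              | .inr (.inr i) => .inr (.inr i)
            left_inv := fun g => by rcases g with e | e | i <;> rfl
            right_inv := fun g => by rcases g with e | e | i <;> rfl }
  ends_vmap := fun g => by
    rcases g with e | e | i
    · show _ = ((sym2RestrictP (· ≠ u₂) (G₂.ends e.1) _).map Sum.inl).map _
      rw [Sym2.map_map]
      rfl
    · show _ = ((sym2RestrictP (· ≠ u₁) (G₁.ends e.1) _).map Sum.inr).map _
      rw [Sym2.map_map]
      rfl
    · have h0 : Multigraph.ends (vertexGlue G₂ G₁ u₂ u₁ ι₂ ι₁) (Sum.inr (Sum.inr i)) =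
          s(Sum.inl ⟨Sym2.Mem.other (ι₂ i).2, other_ne (ι₂ i).2⟩,
            Sum.inr ⟨Sym2.Mem.other (ι₁ i).2, other_ne (ι₁ i).2⟩) := rfl
      rw [h0, Sym2.map_pair_eq]
      exact Sym2.eq_swap


/-- **Vertex gluing preserves exact `k`-edge-connectivity.**  Let `G₁`, `G₂`
be exactly `k`-edge-connected multigraphs on disjoint vertex types, and let
`u₁ ∈ G₁`, `u₂ ∈ G₂` be degree-`k` vertices whose incident edges are
enumerated by `ι₁`, `ι₂` (so the `i`-th edge at `u₁` goes to the neighbor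
`v₁^i` and the `i`-th edge at `u₂` goes to `v₂^i`).  Then the vertex gluing of
`G₁` and `G₂` — obtained by deleting `u₁` and `u₂` with their incident edges
and adding the `k` edges `(v₁^i, v₂^i)` — is exactly `k`-edge-connected. -/
theorem vertexGlue_exactlyEdgeConnected {V₁ V₂ : Type} (G₁ : Multigraph V₁)
    (G₂ : Multigraph V₂) (u₁ : V₁) (u₂ : V₂) {k : ℕ}
    (ι₁ : Fin k ≃ {e : G₁.Edge // u₁ ∈ G₁.ends e})
    (ι₂ : Fin k ≃ {e : G₂.Edge // u₂ ∈ G₂.ends e})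
    (h₁ : G₁.ExactlyEdgeConnected k) (h₂ : G₂.ExactlyEdgeConnected k) :
    (vertexGlue G₁ G₂ u₁ u₂ ι₁ ι₂).ExactlyEdgeConnected k := by
  classical
  constructor
  · have n1 : Nontrivial V₁ := h₁.1
    have n2 : Nontrivial V₂ := h₂.1
    obtain ⟨a, ha⟩ := exists_ne u₁
    obtain ⟨b, hb⟩ := exists_ne u₂
    exact ⟨Sum.inl ⟨a, ha⟩, Sum.inr ⟨b, hb⟩, by simp⟩
  · intro s t hst
    rcases s with a | a <;> rcases t with b | b
    · have hab : a ≠ b := fun hc => hst (congrArg Sum.inl hc)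
      exact ⟨glue_hasEDP_inl_inl h₁ h₂ a b hab, glue_not_hasEDP_inl_inl h₁ a b hab⟩
    · exact ⟨glue_hasEDP_inl_inr h₁ h₂ a b, glue_not_hasEDP_inl_inr a b⟩
    · exact ⟨(glue_hasEDP_inl_inr h₁ h₂ b a).symm,
        fun hc => glue_not_hasEDP_inl_inr b a hc.symm⟩
    · have hab : a ≠ b := fun hc => hst (congrArg Sum.inr hc)
      constructor
      · exact (glueSwap G₁ G₂ u₁ u₂ ι₁ ι₂).hasEDP
          (glue_hasEDP_inl_inl (ι₁ := ι₂) (ι₂ := ι₁) h₂ h₁ a b hab)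
      · intro hc
        exact glue_not_hasEDP_inl_inl (ι₁ := ι₂) (ι₂ := ι₁) h₂ a b hab
          ((glueSwap G₁ G₂ u₁ u₂ ι₁ ι₂).symm'.hasEDP hc)


end Multigraph
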